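/- For S ∈ ℝ, the determinant of the matrix L₀(S) vanishes if and only if S = S̄ = γ (Σ_{i=1}^N x_i β_i)^{-1}. -/

import Mathlib

/-- The `(N+1) × (N+1)` matrix `L₀(S)` of the frozen linearization: first row
`(−σ, β₁S, …, β_N S)`, first column `(−σ, x₁σ, …, x_N σ)ᵗ`, remaining diagonal
entries `−γ`, all other entries `0`. -/
noncomputable def L0 (N : ℕ) (σ γ : ℝ) (β x : Fin N → ℝ) (S : ℝ) :
    Matrix (Fin (N + 1)) (Fin (N + 1)) ℝ :=
  Matrix.of fun i j =>
    Fin.cases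
      (Fin.cases (-σ) (fun k => β k * S) j)
      (fun k => Fin.cases (x k * σ) (fun l => if k = l then -γ else 0) j)
      i

/-- `det (L₀(S)) = 0` iff `S = S̄ = γ (Σᵢ xᵢ βᵢ)⁻¹`. -/
theorem stmt_2
    (N : ℕ) [NeZero N]
    (σ : ℝ) (hσ : 0 < σ)
    (γ β x : Fin N → ℝ)
    (hγ : ∀ i, 0 < γ i) (hβ : ∀ i, 0 < β i) (hx : ∀ i, 0 < x i)
    (hxsum : ∑ i, x i = 1)
    (γmin : ℝ) (hγmin : γmin = Finset.univ.inf' Finset.univ_nonempty γ)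
    (Sbar : ℝ) (hSbar : Sbar = γmin * (∑ i, x i * β i)⁻¹)
    (S : ℝ) :
    (L0 N σ γmin β x S).det = 0 ↔ S = Sbar := by
  have hγ0 : 0 < γmin := by
    rw [hγmin, Finset.lt_inf'_iff]
    exact fun i _ => hγ i
  set τ : ℝ := ∑ i, x i * β i with hτdef
  have hτ : 0 < τ :=
    Finset.sum_pos (fun i _ => mul_pos (hx i) (hβ i)) Finset.univ_nonempty
  rw [← Matrix.exists_mulVec_eq_zero_iff]
  constructor
  · rintro ⟨v, hv0, hMv⟩
    have hrow : ∀ k : Fin N, v k.succ = x k * σ * v 0 / γmin := by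
      intro k
      have h := congrFun hMv k.succ
      simp [L0, Matrix.mulVec, dotProduct, Fin.sum_univ_succ, ite_mul,
        Finset.sum_ite_eq] at h
      field_simp
      linarith
    have hv00 : v 0 ≠ 0 := by
      intro h0
      apply hv0
      funext i
      refine Fin.cases ?_ ?_ i
      · exact h0
      · intro k; rw [hrow k, h0, Pi.zero_apply]; ring
    have h := congrFun hMv 0
    simp only [L0, Matrix.mulVec, dotProduct, Fin.sum_univ_succ,
      Matrix.of_apply, Fin.cases_zero, Fin.cases_succ, Pi.zero_apply] at h
    have hsum : ∑ k : Fin N, β k * S * v k.succ = S * σ * v 0 / γmin * τ := by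
      rw [hτdef, Finset.mul_sum]
      refine Finset.sum_congr rfl fun k _ => ?_
      rw [hrow k]
      field_simp
    rw [hsum] at h
    have hSτ : S * τ = γmin := by
      have h' : v 0 * (S * τ - γmin) = 0 := by
        field_simp at h
        nlinarith [h]
      rcases mul_eq_zero.mp h' with h'' | h''
      · exact absurd h'' hv00
      · linarith
    rw [hSbar]
    field_simp
    linarith [hSτ]
  · intro hS
    refine ⟨Fin.cons 1 (fun k => x k * σ / γmin), ?_, ?_⟩
    · intro h
      have := congrFun h 0
      simp at this
    · funext i
      refine Fin.cases ?_ ?_ i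
      · simp only [L0, Matrix.mulVec, dotProduct, Fin.sum_univ_succ,
          Matrix.of_apply, Fin.cases_zero, Fin.cases_succ, Fin.cons_zero,
          Fin.cons_succ, Pi.zero_apply, mul_one]
        have hsum : ∑ k : Fin N, β k * S * (x k * σ / γmin) = S * σ / γmin * τ := by
          rw [hτdef, Finset.mul_sum]
          exact Finset.sum_congr rfl fun k _ => by field_simp
        rw [hsum, hS, hSbar]
        field_simp
        ring
      · intro k
        simp only [L0, Matrix.mulVec, dotProduct, Fin.sum_univ_succ,
          Matrix.of_apply, Fin.cases_zero, Fin.cases_succ, Fin.cons_zero,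
          Fin.cons_succ, Pi.zero_apply, mul_one, ite_mul, zero_mul]
        rw [Finset.sum_ite_eq]
        simp
        field_simp
        ring
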